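/- Let G = (V,E) be a finite simple graph and A, B ⊆ V. If there exists at least one A-B-path in G and every A-B-path in G has even length, then σ(G₋A)·σ(G₋B) < σ(G)·σ(G₋A₋B). -/

import Mathlib

open scoped Classical

/-- The number of independent vertex sets of `G` avoiding the set `W`
(i.e. `σ(G₋W)`, the number of independent sets of `G` with `W` deleted). -/
noncomputable def sigmaDel {V : Type*} [Fintype V] (G : SimpleGraph V) (W : Set V) : ℕ :=
  (Finset.univ.filter
    (fun s : Finset V => (∀ v ∈ s, v ∉ W) ∧ ∀ u ∈ s, ∀ v ∈ s, ¬ G.Adj u v)).card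

/-- The number of independent vertex sets of `G`. -/
noncomputable def sigmaG {V : Type*} [Fintype V] (G : SimpleGraph V) : ℕ :=
  sigmaDel G ∅

/-- `p` is an `A`-`B`-path: a path meeting `A` exactly in its first vertex
and `B` exactly in its last vertex. -/
def IsABPath {V : Type*} (G : SimpleGraph V) (A B : Set V) {a b : V} (p : G.Walk a b) : Prop :=
  p.IsPath ∧ a ∈ A ∧ b ∈ B ∧ (∀ x ∈ p.support, x ∈ A → x = a) ∧ (∀ x ∈ p.support, x ∈ B → x = b)

namespace ABAux
open SimpleGraph Walk Finset

variable {V : Type*} {G : SimpleGraph V}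

lemma length_drop {u v : V} (p : G.Walk u v) (n : ℕ) : (p.drop n).length = p.length - n := by
  induction p generalizing n with
  | nil =>
    cases n with
    | zero => simp [Walk.drop]
    | succ m => simp [Walk.drop]
  | cons h q ih =>
    cases n with
    | zero => simp [Walk.drop]
    | succ m => simp [Walk.drop, ih]

lemma support_drop_subset {u v : V} (p : G.Walk u v) (n : ℕ) :
    (p.drop n).support ⊆ p.support := by
  induction p generalizing n with
  | nil =>
    cases n with
    | zero => simp [Walk.drop]
    | succ m =>
      simp only [Walk.drop]
      intro x hx
      simp only [Walk.support_nil, List.mem_singleton] at hx ⊢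
      simpa using hx
  | cons h q ih =>
    cases n with
    | zero => simp [Walk.drop]
    | succ m =>
      simp only [Walk.drop, support_copy, support_cons]
      exact fun x hx => List.mem_cons_of_mem _ (ih m hx)

lemma getVert_injOn {u v : V} {p : G.Walk u v} (hp : p.IsPath) :
    ∀ i ≤ p.length, ∀ j ≤ p.length, p.getVert i = p.getVert j → i = j := by
  induction p with
  | nil => intro i hi j hj _; simp at hi hj; omega
  | @cons a c d h q ih =>
    rw [Walk.cons_isPath_iff] at hp
    intro i hi j hj hij
    cases i with
    | zero =>
      cases j with
      | zero => rfl
      | succ m =>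
        exfalso
        rw [getVert_zero, getVert_cons_succ] at hij
        exact hp.2 (mem_support_iff_exists_getVert.mpr
          ⟨m, hij.symm, by simpa using hj⟩)
    | succ n =>
      cases j with
      | zero =>
        exfalso
        rw [getVert_zero, getVert_cons_succ] at hij
        exact hp.2 (mem_support_iff_exists_getVert.mpr
          ⟨n, hij, by simpa using hi⟩)
      | succ m =>
        rw [getVert_cons_succ, getVert_cons_succ] at hij
        have := ih hp.1 n (by simpa using hi) m (by simpa using hj) hij
        omega

lemma length_takeUntil_le_getVert [DecidableEq V] {u v x : V} {p : G.Walk u v} (i : ℕ)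
    (hx : x ∈ p.support) (hi : p.getVert i = x) : (p.takeUntil x hx).length ≤ i := by
  induction p generalizing i with
  | nil => exact le_trans (Walk.length_takeUntil_le _ _) (by simp)
  | @cons a c d h q ih =>
    by_cases hux : a = x
    · subst hux
      simp [Walk.takeUntil]
    · cases i with
      | zero => exact absurd (by simpa using hi) hux
      | succ m =>
        rw [getVert_cons_succ] at hi
        have hxq : x ∈ q.support := by
          have h2 := hx
          rw [Walk.support_cons, List.mem_cons] at h2
          rcases h2 with e | e
          · exact absurd e.symm hux
          · exact e
        have heq : (Walk.cons h q).takeUntil x hx = Walk.cons h (q.takeUntil x hxq) := by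
          simp [Walk.takeUntil, hux]
        rw [heq, Walk.length_cons]
        exact Nat.succ_le_succ (ih m hxq hi)


lemma parity_walk (S T : Finset V)
    (hS : ∀ u ∈ S, ∀ v ∈ S, ¬ G.Adj u v) (hT : ∀ u ∈ T, ∀ v ∈ T, ¬ G.Adj u v) :
    ∀ {x y : V} (w : G.Walk x y), (∀ v ∈ w.support, v ∈ symmDiff S T) →
      (Even w.length ↔ (x ∈ S ↔ y ∈ S)) := by
  intro x y w
  induction w with
  | nil => simp
  | @cons a c d h q ih =>
    intro hsupp
    have ha : a ∈ symmDiff S T := hsupp a (by simp)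
    have hc : c ∈ symmDiff S T := hsupp c (by simp)
    have hih := ih (fun v hv => hsupp v (by simp [hv]))
    rw [Finset.mem_symmDiff] at ha hc
    have hac : a ∈ S ↔ c ∉ S := by
      constructor
      · intro haS hcS
        exact hS a haS c hcS h
      · intro hcS
        rcases ha with ⟨h1, _⟩ | ⟨h1, h2⟩
        · exact h1
        · exfalso
          rcases hc with ⟨h3, h4⟩ | ⟨h3, _⟩
          · exact hcS h3
          · exact hT a h1 c h3 h
    rw [Walk.length_cons, Nat.even_add_one, hih]
    clear ih hsupp ha hc hih
    tauto

/-- From a `G`-walk inside `S ∆ T` from a `B∩(S\T)`-vertex to an `A∩(T\S)`-vertex,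
derive a contradiction with "all A-B-paths are even". -/
lemma no_cross (A B : Set V)
    (heven : ∀ a b, ∀ p : G.Walk a b, IsABPath G A B p → Even p.length)
    (S T : Finset V)
    (hS : ∀ u ∈ S, ∀ v ∈ S, ¬ G.Adj u v) (hT : ∀ u ∈ T, ∀ v ∈ T, ¬ G.Adj u v)
    (hSA : ∀ v ∈ S, v ∉ A) (hTB : ∀ v ∈ T, v ∉ B) :
    ∀ (n : ℕ) {x y : V} (w : G.Walk x y), w.length ≤ n →
      (∀ v ∈ w.support, v ∈ symmDiff S T) →
      x ∈ B → x ∈ S → x ∉ T → y ∈ A → y ∈ T → y ∉ S → False := by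
  intro n
  induction n with
  | zero =>
    intro x y w hlen _ _ hxS _ _ _ hyS
    have : x = y := Walk.eq_of_length_eq_zero (Nat.le_zero.mp hlen)
    exact hyS (this ▸ hxS)
  | succ n ih =>
    intro x y w hlen hsupp hxB hxS hxT hyA hyT hyS
    by_cases hA : ∃ z ∈ w.support, z ∈ A ∧ z ≠ y
    · obtain ⟨z, hzsupp, hzA, hzy⟩ := hA
      have hzS : z ∉ S := fun h => hSA z h hzA
      have hzST : z ∈ symmDiff S T := hsupp z hzsupp
      have hzT : z ∈ T := by
        rw [Finset.mem_symmDiff] at hzST; tauto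
      have hlt : (w.takeUntil z hzsupp).length ≤ n := by
        have hspec := congr_arg Walk.length (w.take_spec hzsupp)
        rw [Walk.length_append] at hspec
        have hd0 : (w.dropUntil z hzsupp).length ≠ 0 := fun h0 =>
          hzy (Walk.eq_of_length_eq_zero h0)
        omega
      exact ih (w.takeUntil z hzsupp) hlt
        (fun v hv => hsupp v (Walk.support_takeUntil_subset _ _ hv))
        hxB hxS hxT hzA hzT hzS
    · by_cases hB : ∃ z ∈ w.support, z ∈ B ∧ z ≠ x
      · obtain ⟨z, hzsupp, hzB, hzx⟩ := hB
        have hzT : z ∉ T := fun h => hTB z h hzB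
        have hzST : z ∈ symmDiff S T := hsupp z hzsupp
        have hzS : z ∈ S := by
          rw [Finset.mem_symmDiff] at hzST; tauto
        have hlt : (w.dropUntil z hzsupp).length ≤ n := by
          have hspec := congr_arg Walk.length (w.take_spec hzsupp)
          rw [Walk.length_append] at hspec
          have hd0 : (w.takeUntil z hzsupp).length ≠ 0 := fun h0 =>
            hzx (Walk.eq_of_length_eq_zero h0).symm
          omega
        exact ih (w.dropUntil z hzsupp) hlt
          (fun v hv => hsupp v (Walk.support_dropUntil_subset _ _ hv))
          hzB hzS hzT hyA hyT hyS
      · push_neg at hA hB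
        set q := w.bypass with hq
        have hqsupp : ∀ v ∈ q.support, v ∈ w.support :=
          fun v hv => Walk.support_bypass_subset w hv
        have habp : IsABPath G A B q.reverse := by
          refine ⟨w.bypass_isPath.reverse, hyA, hxB, ?_, ?_⟩
          · intro z hz hzA
            rw [Walk.support_reverse, List.mem_reverse] at hz
            exact hA z (hqsupp z hz) hzA
          · intro z hz hzB
            rw [Walk.support_reverse, List.mem_reverse] at hz
            exact hB z (hqsupp z hz) hzB
        have hev : Even q.reverse.length := heven _ _ _ habp
        rw [Walk.length_reverse] at hev
        have hpar := parity_walk S T hS hT q (fun v hv => hsupp v (hqsupp v hv))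
        rw [hpar] at hev
        exact hyS (hev.mp hxS)


/-- restriction of `G` to a finset `U` (as a graph on `V`). -/
def Rgraph (G : SimpleGraph V) (U : Finset V) : SimpleGraph V where
  Adj u v := G.Adj u v ∧ u ∈ U ∧ v ∈ U
  symm := by constructor; intro u v h; exact ⟨h.1.symm, h.2.2, h.2.1⟩
  loopless := by constructor; intro v h; exact G.irrefl h.1

noncomputable def Dset (G : SimpleGraph V) (A : Set V) (U : Finset V) : Finset V :=
  U.filter (fun v => ∃ a, a ∈ A ∧ (Rgraph G U).Reachable v a)

lemma exists_walk_of_rwalk {U : Finset V} : ∀ {x y : V} (w : (Rgraph G U).Walk x y),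
    x ∈ U → ∃ w' : G.Walk x y, ∀ v ∈ w'.support, v ∈ U := by
  intro x y w hx
  induction w with
  | nil => exact ⟨Walk.nil, by simpa using hx⟩
  | @cons a c d h q ih =>
    obtain ⟨w', hw'⟩ := ih h.2.2
    refine ⟨Walk.cons h.1 w', ?_⟩
    intro v hv
    rw [Walk.support_cons, List.mem_cons] at hv
    rcases hv with rfl | hv
    · exact h.2.1
    · exact hw' v hv

lemma rreach_of_walk {U : Finset V} : ∀ {x y : V} (w : G.Walk x y),
    (∀ v ∈ w.support, v ∈ U) → (Rgraph G U).Reachable x y := by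
  intro x y w
  induction w with
  | nil => exact fun _ => Reachable.refl _
  | @cons a c d h q ih =>
    intro hs
    have hx : a ∈ U := hs a (by simp)
    have hc : c ∈ U := hs c (by simp)
    have hA : (Rgraph G U).Adj a c := ⟨h, hx, hc⟩
    exact hA.reachable.trans (ih fun v hv => hs v (by simp [hv]))

section Swap

lemma mem_Dset {A : Set V} {v : V} {U : Finset V} :
    v ∈ Dset G A U ↔ v ∈ U ∧ ∃ a, a ∈ A ∧ (Rgraph G U).Reachable v a := by
  simp [Dset]

variable {A B : Set V} {S T : Finset V}

lemma swap_ind1 (hS : ∀ u ∈ S, ∀ v ∈ S, ¬ G.Adj u v)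
    (hT : ∀ u ∈ T, ∀ v ∈ T, ¬ G.Adj u v) :
    ∀ u ∈ symmDiff S (Dset G A (symmDiff S T)),
      ∀ v ∈ symmDiff S (Dset G A (symmDiff S T)), ¬ G.Adj u v := by
  set U := symmDiff S T with hU
  set D := Dset G A U with hD
  have hDU : D ⊆ U := Finset.filter_subset _ _
  have hDT : ∀ w ∈ D, w ∉ S → w ∈ T := by
    intro w hw hwS
    have := Finset.mem_symmDiff.mp (hDU hw)
    tauto
  have hclosed : ∀ u v : V, u ∈ U → v ∈ D → G.Adj u v → u ∈ D := by
    intro u v huU hvD hadj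
    rw [mem_Dset] at hvD ⊢
    obtain ⟨hvU, a, haA, hr⟩ := hvD
    have hA : (Rgraph G U).Adj u v := ⟨hadj, huU, hvU⟩
    exact ⟨huU, a, haA, hA.reachable.trans hr⟩
  have aux : ∀ u v : V, u ∈ S → u ∉ D → v ∈ D → v ∉ S → G.Adj u v → False := by
    intro u v huS huD hvD hvS hadj
    by_cases huU : u ∈ U
    · exact huD (hclosed u v huU hvD hadj)
    · have huT : u ∈ T := by
        rw [hU, Finset.mem_symmDiff] at huU
        tauto
      exact hT u huT v (hDT v hvD hvS) hadj
  intro u hu v hv hadj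
  rw [Finset.mem_symmDiff] at hu hv
  rcases hu with ⟨huS, huD⟩ | ⟨huD, huS⟩ <;> rcases hv with ⟨hvS, hvD⟩ | ⟨hvD, hvS⟩
  · exact hS u huS v hvS hadj
  · exact aux u v huS huD hvD hvS hadj
  · exact aux v u hvS hvD huD huS hadj.symm
  · exact hT u (hDT u huD huS) v (hDT v hvD hvS) hadj

lemma swap_ind2 (hS : ∀ u ∈ S, ∀ v ∈ S, ¬ G.Adj u v)
    (hT : ∀ u ∈ T, ∀ v ∈ T, ¬ G.Adj u v) :
    ∀ u ∈ symmDiff T (Dset G A (symmDiff S T)),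
      ∀ v ∈ symmDiff T (Dset G A (symmDiff S T)), ¬ G.Adj u v := by
  set U := symmDiff S T with hU
  set D := Dset G A U with hD
  have hDU : D ⊆ U := Finset.filter_subset _ _
  have hDS : ∀ w ∈ D, w ∉ T → w ∈ S := by
    intro w hw hwT
    have := Finset.mem_symmDiff.mp (hDU hw)
    tauto
  have hclosed : ∀ u v : V, u ∈ U → v ∈ D → G.Adj u v → u ∈ D := by
    intro u v huU hvD hadj
    rw [mem_Dset] at hvD ⊢
    obtain ⟨hvU, a, haA, hr⟩ := hvD
    have hA : (Rgraph G U).Adj u v := ⟨hadj, huU, hvU⟩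
    exact ⟨huU, a, haA, hA.reachable.trans hr⟩
  have aux : ∀ u v : V, u ∈ T → u ∉ D → v ∈ D → v ∉ T → G.Adj u v → False := by
    intro u v huT huD hvD hvT hadj
    by_cases huU : u ∈ U
    · exact huD (hclosed u v huU hvD hadj)
    · have huS : u ∈ S := by
        rw [hU, Finset.mem_symmDiff] at huU
        tauto
      exact hS u huS v (hDS v hvD hvT) hadj
  intro u hu v hv hadj
  rw [Finset.mem_symmDiff] at hu hv
  rcases hu with ⟨huT, huD⟩ | ⟨huD, huT⟩ <;> rcases hv with ⟨hvT, hvD⟩ | ⟨hvD, hvT⟩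
  · exact hT u huT v hvT hadj
  · exact aux u v huT huD hvD hvT hadj
  · exact aux v u hvT hvD huD huT hadj.symm
  · exact hS u (hDS u huD huT) v (hDS v hvD hvT) hadj

lemma swap_avoidA (hSA : ∀ v ∈ S, v ∉ A) :
    ∀ v ∈ symmDiff T (Dset G A (symmDiff S T)), v ∉ A := by
  set U := symmDiff S T with hU
  intro v hv hvA
  rw [Finset.mem_symmDiff] at hv
  rcases hv with ⟨hvT, hvD⟩ | ⟨hvD, hvT⟩
  · have hvS : v ∉ S := fun h => hSA v h hvA
    have hvU : v ∈ U := by rw [hU, Finset.mem_symmDiff]; tauto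
    exact hvD (mem_Dset.mpr ⟨hvU, v, hvA, Reachable.refl v⟩)
  · have hvU : v ∈ U := Finset.filter_subset _ _ hvD
    have hvS : v ∈ S := by
      rw [hU, Finset.mem_symmDiff] at hvU
      tauto
    exact hSA v hvS hvA

end Swap

lemma swap_avoidB {A B : Set V} {S T : Finset V}
    (heven : ∀ a b, ∀ p : G.Walk a b, IsABPath G A B p → Even p.length)
    (hS : ∀ u ∈ S, ∀ v ∈ S, ¬ G.Adj u v) (hT : ∀ u ∈ T, ∀ v ∈ T, ¬ G.Adj u v)
    (hSA : ∀ v ∈ S, v ∉ A) (hTB : ∀ v ∈ T, v ∉ B) :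
    ∀ v ∈ symmDiff T (Dset G A (symmDiff S T)), v ∉ B := by
  set U := symmDiff S T with hU
  intro v hv hvB
  rw [Finset.mem_symmDiff] at hv
  rcases hv with ⟨hvT, hvD⟩ | ⟨hvD, hvT⟩
  · exact hTB v hvT hvB
  · obtain ⟨hvU, a, haA, hr⟩ := mem_Dset.mp hvD
    have hvS : v ∈ S := by
      rw [hU, Finset.mem_symmDiff] at hvU
      tauto
    obtain ⟨wr⟩ := hr
    obtain ⟨w', hw'⟩ := exists_walk_of_rwalk wr hvU
    have haU : a ∈ U := hw' a w'.end_mem_support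
    have haS : a ∉ S := fun h => hSA a h haA
    have haT : a ∈ T := by
      rw [hU, Finset.mem_symmDiff] at haU
      tauto
    exact no_cross A B heven S T hS hT hSA hTB w'.length w' le_rfl
      hw' hvB hvS hvT haA haT haS

lemma sd_sd (S T D : Finset V) :
    symmDiff (symmDiff S D) (symmDiff T D) = symmDiff S T := by
  ext x
  simp only [Finset.mem_symmDiff]
  tauto

lemma sd_cancel (S D : Finset V) : symmDiff (symmDiff S D) D = S := by
  ext x
  simp only [Finset.mem_symmDiff]
  tauto

end ABAux

theorem sigma_ineq_of_even_ABpaths {V : Type*} [Fintype V] (G : SimpleGraph V) (A B : Set V)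
    (hex : ∃ a b, ∃ p : G.Walk a b, IsABPath G A B p)
    (heven : ∀ a b, ∀ p : G.Walk a b, IsABPath G A B p → Even p.length) :
    sigmaDel G A * sigmaDel G B < sigmaG G * sigmaDel G (A ∪ B) := by
  classical
  open ABAux Finset SimpleGraph Walk in
  set XA := Finset.univ.filter
    (fun s : Finset V => (∀ v ∈ s, v ∉ A) ∧ ∀ u ∈ s, ∀ v ∈ s, ¬ G.Adj u v) with hXA
  set XB := Finset.univ.filter
    (fun s : Finset V => (∀ v ∈ s, v ∉ B) ∧ ∀ u ∈ s, ∀ v ∈ s, ¬ G.Adj u v) with hXB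
  set Y1 := Finset.univ.filter
    (fun s : Finset V => (∀ v ∈ s, v ∉ (∅ : Set V)) ∧ ∀ u ∈ s, ∀ v ∈ s, ¬ G.Adj u v) with hY1
  set Y2 := Finset.univ.filter
    (fun s : Finset V => (∀ v ∈ s, v ∉ (A ∪ B : Set V)) ∧ ∀ u ∈ s, ∀ v ∈ s, ¬ G.Adj u v) with hY2
  let Phi : Finset V × Finset V → Finset V × Finset V := fun st =>
    (symmDiff st.1 (ABAux.Dset G A (symmDiff st.1 st.2)),
     symmDiff st.2 (ABAux.Dset G A (symmDiff st.1 st.2)))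
  -- Phi is injective
  have hinj : Function.Injective Phi := by
    intro st1 st2 heq
    have e1 : (Phi st1).1 = (Phi st2).1 := by rw [heq]
    have e2 : (Phi st1).2 = (Phi st2).2 := by rw [heq]
    have hU : symmDiff st1.1 st1.2 = symmDiff st2.1 st2.2 := by
      have h1 := ABAux.sd_sd st1.1 st1.2 (ABAux.Dset G A (symmDiff st1.1 st1.2))
      have h2 := ABAux.sd_sd st2.1 st2.2 (ABAux.Dset G A (symmDiff st2.1 st2.2))
      calc symmDiff st1.1 st1.2 = symmDiff (Phi st1).1 (Phi st1).2 := h1.symm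
        _ = symmDiff (Phi st2).1 (Phi st2).2 := by rw [e1, e2]
        _ = symmDiff st2.1 st2.2 := h2
    have hD : ABAux.Dset G A (symmDiff st1.1 st1.2)
        = ABAux.Dset G A (symmDiff st2.1 st2.2) := by rw [hU]
    have hfst : st1.1 = st2.1 := by
      have c1 := ABAux.sd_cancel st1.1 (ABAux.Dset G A (symmDiff st1.1 st1.2))
      have c2 := ABAux.sd_cancel st2.1 (ABAux.Dset G A (symmDiff st2.1 st2.2))
      calc st1.1 = symmDiff (Phi st1).1 (ABAux.Dset G A (symmDiff st1.1 st1.2)) := c1.symm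
        _ = symmDiff (Phi st2).1 (ABAux.Dset G A (symmDiff st2.1 st2.2)) := by rw [e1, hD]
        _ = st2.1 := c2
    have hsnd : st1.2 = st2.2 := by
      have c1 := ABAux.sd_cancel st1.2 (ABAux.Dset G A (symmDiff st1.1 st1.2))
      have c2 := ABAux.sd_cancel st2.2 (ABAux.Dset G A (symmDiff st2.1 st2.2))
      calc st1.2 = symmDiff (Phi st1).2 (ABAux.Dset G A (symmDiff st1.1 st1.2)) := c1.symm
        _ = symmDiff (Phi st2).2 (ABAux.Dset G A (symmDiff st2.1 st2.2)) := by rw [e2, hD]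
        _ = st2.2 := c2
    exact Prod.ext hfst hsnd
  -- Phi maps X into Y
  have himage : ∀ st ∈ XA ×ˢ XB, Phi st ∈ Y1 ×ˢ Y2 := by
    rintro ⟨S, T⟩ hst
    rw [Finset.mem_product] at hst
    obtain ⟨hSA, hS⟩ := (Finset.mem_filter.mp hst.1).2
    obtain ⟨hTB, hT⟩ := (Finset.mem_filter.mp hst.2).2
    rw [Finset.mem_product]
    constructor
    · rw [Finset.mem_filter]
      exact ⟨Finset.mem_univ _, fun v _ h => h, ABAux.swap_ind1 hS hT⟩
    · rw [Finset.mem_filter]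
      refine ⟨Finset.mem_univ _, ?_, ABAux.swap_ind2 hS hT⟩
      intro v hv hvAB
      rcases hvAB with hvA | hvB
      · exact ABAux.swap_avoidA hSA v hv hvA
      · exact ABAux.swap_avoidB heven hS hT hSA hTB v hv hvB
  -- a minimal A-B-path
  obtain ⟨a0, b0, p0, hp0⟩ := hex
  have hPn : ∃ n, ∃ a b, ∃ p : G.Walk a b, IsABPath G A B p ∧ p.length = n :=
    ⟨p0.length, a0, b0, p0, hp0, rfl⟩
  obtain ⟨a, b, p, hp, hL⟩ := Nat.find_spec hPn
  have hmin : ∀ a' b', ∀ q : G.Walk a' b', IsABPath G A B q → Nat.find hPn ≤ q.length :=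
    fun a' b' q hq => Nat.find_le ⟨a', b', q, hq, rfl⟩
  obtain ⟨k, hk⟩ := heven a b p hp
  -- no chords
  have hchord : ∀ i j : ℕ, i + 2 ≤ j → j ≤ p.length →
      ¬ G.Adj (p.getVert i) (p.getVert j) := by
    intro i j hij hjL hadj
    have hmem : p.getVert i ∈ p.support :=
      SimpleGraph.Walk.mem_support_iff_exists_getVert.mpr ⟨i, rfl, by omega⟩
    set w := (p.takeUntil _ hmem).append (SimpleGraph.Walk.cons hadj (p.drop j)) with hw
    have hwlen : w.length ≤ i + 1 + (p.length - j) := by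
      rw [hw, SimpleGraph.Walk.length_append, SimpleGraph.Walk.length_cons,
        ABAux.length_drop]
      have := ABAux.length_takeUntil_le_getVert i hmem rfl
      omega
    have hwsup : ∀ v ∈ w.support, v ∈ p.support := by
      intro v hv
      rw [hw, SimpleGraph.Walk.mem_support_append_iff] at hv
      rcases hv with hv | hv
      · exact SimpleGraph.Walk.support_takeUntil_subset _ _ hv
      · rw [SimpleGraph.Walk.support_cons, List.mem_cons] at hv
        rcases hv with rfl | hv
        · exact hmem
        · exact ABAux.support_drop_subset p j hv
    have hq : IsABPath G A B w.bypass := by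
      refine ⟨SimpleGraph.Walk.bypass_isPath w, hp.2.1, hp.2.2.1, ?_, ?_⟩
      · intro x hx hxA
        exact hp.2.2.2.1 x (hwsup x (SimpleGraph.Walk.support_bypass_subset w hx)) hxA
      · intro x hx hxB
        exact hp.2.2.2.2 x (hwsup x (SimpleGraph.Walk.support_bypass_subset w hx)) hxB
    have h1 := hmin a b w.bypass hq
    have h2 := SimpleGraph.Walk.length_bypass_le w
    omega
  have hinjV := ABAux.getVert_injOn hp.1
  set S' := (Finset.range (k+1)).image (fun i => p.getVert (2*i)) with hS'
  set T' := (Finset.range k).image (fun i => p.getVert (2*i+1)) with hT'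
  have hLk : p.length = 2 * k := by omega
  have hdisj : ∀ x, x ∈ S' → x ∈ T' → False := by
    intro x hx1 hx2
    rw [hS', Finset.mem_image] at hx1
    rw [hT', Finset.mem_image] at hx2
    obtain ⟨i, hi, hix⟩ := hx1
    obtain ⟨j, hj, hjx⟩ := hx2
    rw [Finset.mem_range] at hi hj
    have := hinjV (2*i) (by omega) (2*j+1) (by omega) (hix.trans hjx.symm)
    omega
  -- the witness is in Y
  have hwitY : (S', T') ∈ Y1 ×ˢ Y2 := by
    have hindS' : ∀ u ∈ S', ∀ v ∈ S', ¬ G.Adj u v := by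
      intro u hu v hv hadj
      rw [hS', Finset.mem_image] at hu hv
      obtain ⟨i, hi, rfl⟩ := hu
      obtain ⟨j, hj, rfl⟩ := hv
      rw [Finset.mem_range] at hi hj
      rcases lt_trichotomy i j with h | h | h
      · exact hchord (2*i) (2*j) (by omega) (by omega) hadj
      · subst h
        exact G.irrefl hadj
      · exact hchord (2*j) (2*i) (by omega) (by omega) hadj.symm
    have hindT' : ∀ u ∈ T', ∀ v ∈ T', ¬ G.Adj u v := by
      intro u hu v hv hadj
      rw [hT', Finset.mem_image] at hu hv
      obtain ⟨i, hi, rfl⟩ := hu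
      obtain ⟨j, hj, rfl⟩ := hv
      rw [Finset.mem_range] at hi hj
      rcases lt_trichotomy i j with h | h | h
      · exact hchord (2*i+1) (2*j+1) (by omega) (by omega) hadj
      · subst h
        exact G.irrefl hadj
      · exact hchord (2*j+1) (2*i+1) (by omega) (by omega) hadj.symm
    rw [Finset.mem_product]
    constructor
    · rw [Finset.mem_filter]
      exact ⟨Finset.mem_univ _, fun v _ h => h, hindS'⟩
    · rw [Finset.mem_filter]
      refine ⟨Finset.mem_univ _, ?_, hindT'⟩
      intro v hv hvAB
      rw [hT', Finset.mem_image] at hv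
      obtain ⟨i, hi, rfl⟩ := hv
      rw [Finset.mem_range] at hi
      have hsup : p.getVert (2*i+1) ∈ p.support :=
        SimpleGraph.Walk.mem_support_iff_exists_getVert.mpr ⟨2*i+1, rfl, by omega⟩
      rcases hvAB with hvA | hvB
      · have := hp.2.2.2.1 _ hsup hvA
        have h0 : p.getVert (2*i+1) = p.getVert 0 := by
          rw [SimpleGraph.Walk.getVert_zero]; exact this
        have := hinjV (2*i+1) (by omega) 0 (by omega) h0
        omega
      · have := hp.2.2.2.2 _ hsup hvB
        have h0 : p.getVert (2*i+1) = p.getVert p.length := by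
          rw [SimpleGraph.Walk.getVert_length]; exact this
        have := hinjV (2*i+1) (by omega) p.length (by omega) h0
        omega
  -- the witness is not in the image
  have hwitNot : ∀ st ∈ XA ×ˢ XB, Phi st ≠ (S', T') := by
    rintro ⟨S, T⟩ hst heq
    rw [Finset.mem_product] at hst
    obtain ⟨hSA, hSind⟩ := (Finset.mem_filter.mp hst.1).2
    obtain ⟨hTB, hTind⟩ := (Finset.mem_filter.mp hst.2).2
    have heq1 : symmDiff S (ABAux.Dset G A (symmDiff S T)) = S' := congrArg Prod.fst heq
    have heq2 : symmDiff T (ABAux.Dset G A (symmDiff S T)) = T' := congrArg Prod.snd heq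
    have hUeq : symmDiff S T = symmDiff S' T' := by
      rw [← heq1, ← heq2, ABAux.sd_sd]
    have hsupp : ∀ x ∈ p.support, x ∈ symmDiff S T := by
      intro x hx
      obtain ⟨n, rfl, hn⟩ := SimpleGraph.Walk.mem_support_iff_exists_getVert.mp hx
      rw [hUeq, Finset.mem_symmDiff]
      rcases Nat.even_or_odd n with ⟨i, hi⟩ | ⟨i, hi⟩
      · left
        have hmemS' : p.getVert n ∈ S' := by
          rw [hS', Finset.mem_image]
          exact ⟨i, Finset.mem_range.mpr (by omega), by congr 1; omega⟩
        exact ⟨hmemS', fun h => hdisj _ hmemS' h⟩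
      · right
        have hmemT' : p.getVert n ∈ T' := by
          rw [hT', Finset.mem_image]
          exact ⟨i, Finset.mem_range.mpr (by omega), by congr 1; omega⟩
        exact ⟨hmemT', fun h => hdisj _ h hmemT'⟩
    have hbS' : b ∈ S' := by
      rw [hS', Finset.mem_image]
      refine ⟨k, Finset.mem_range.mpr (by omega), ?_⟩
      rw [← hLk, SimpleGraph.Walk.getVert_length]
    have hbU : b ∈ symmDiff S T := hsupp b p.end_mem_support
    have hbT : b ∉ T := fun h => hTB b h hp.2.2.1
    have hbS : b ∈ S := by
      rw [Finset.mem_symmDiff] at hbU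
      tauto
    have hreach : (ABAux.Rgraph G (symmDiff S T)).Reachable b a :=
      ABAux.rreach_of_walk p.reverse
        (fun v hv => hsupp v (by rwa [SimpleGraph.Walk.support_reverse, List.mem_reverse] at hv))
    have hbD : b ∈ ABAux.Dset G A (symmDiff S T) :=
      ABAux.mem_Dset.mpr ⟨hbU, a, hp.2.1, hreach⟩
    have : b ∉ symmDiff S (ABAux.Dset G A (symmDiff S T)) := by
      rw [Finset.mem_symmDiff]
      tauto
    rw [heq1] at this
    exact this hbS'
  -- counting
  have hsub : (XA ×ˢ XB).image Phi ⊆ Y1 ×ˢ Y2 := by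
    intro y hy
    rw [Finset.mem_image] at hy
    obtain ⟨st, hst, rfl⟩ := hy
    exact himage st hst
  have hnotmem : (S', T') ∉ (XA ×ˢ XB).image Phi := by
    intro h
    rw [Finset.mem_image] at h
    obtain ⟨st, hst, h⟩ := h
    exact hwitNot st hst h
  have hss : (XA ×ˢ XB).image Phi ⊂ Y1 ×ˢ Y2 :=
    (Finset.ssubset_iff_of_subset hsub).mpr ⟨(S', T'), hwitY, hnotmem⟩
  have hcard : (XA ×ˢ XB).card < (Y1 ×ˢ Y2).card := by
    have := Finset.card_lt_card hss
    rwa [Finset.card_image_of_injective _ hinj] at this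
  have e1 : sigmaDel G A * sigmaDel G B = (XA ×ˢ XB).card := by
    rw [Finset.card_product, hXA, hXB]
    unfold sigmaDel
    congr!
  have e2 : sigmaG G * sigmaDel G (A ∪ B) = (Y1 ×ˢ Y2).card := by
    rw [Finset.card_product, hY1, hY2]
    unfold sigmaG sigmaDel
    congr!
  rw [e1, e2]
  exact hcard
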